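/- If (X,d) is a semimetric space in which every closed ball is a closed subset of the topological space (X,τ_d) (where τ_d is the topology whose open sets A satisfy: for every a∈A there is r>0 with the open ball B(a,r)⊆A), then for all points x,y∈X and every sequence (x_n), if lim d(x_n,x)=0 and lim d(x_n,y)=0, then x=y. -/
import Mathlib


open Set Filter Topology

structure IsSemimetric {X : Type*} (d : X → X → ℝ) : Prop where
  nonneg : ∀ x y, 0 ≤ d x y
  eq_iff : ∀ x y, d x y = 0 ↔ x = y
  symm : ∀ x y, d x y = d y x

/-- `η` is a homeomorphism of `[0,∞)` onto itself (increasing, `η 0 = 0`). -/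
structure IsQSHomeo (η : ℝ → ℝ) : Prop where
  maps : ∀ t, 0 ≤ t → 0 ≤ η t
  zero : η 0 = 0
  strictMonoOn : StrictMonoOn η (Set.Ici 0)
  surjOn : ∀ s, 0 ≤ s → ∃ t, 0 ≤ t ∧ η t = s
  continuousOn : ContinuousOn η (Set.Ici 0)

/-- `f` is an `η`-quasisymmetric mapping between the semimetric spaces `(X,d)` and `(Y,ρ)`. -/
def IsQuasisymmetric {X Y : Type*} (d : X → X → ℝ) (ρ : Y → Y → ℝ)
    (η : ℝ → ℝ) (f : X → Y) : Prop :=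
  IsQSHomeo η ∧ ∀ (x a b : X) (t : ℝ), 0 < t →
    d x a ≤ t * d x b → ρ (f x) (f a) ≤ η t * ρ (f x) (f b)

structure IsTriangleFunction {X : Type*} (d : X → X → ℝ) (Φ : ℝ → ℝ → ℝ) : Prop where
  symm : ∀ u v, Φ u v = Φ v u
  mono : ∀ u u' v v', 0 ≤ u → u ≤ u' → 0 ≤ v → v ≤ v' → Φ u v ≤ Φ u' v'
  zero : Φ 0 0 = 0
  tri : ∀ x y z, d x y ≤ Φ (d x z) (d y z)

def IsPtolemaic {X : Type*} (d : X → X → ℝ) : Prop :=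
  ∀ x y z t : X, d x z * d t y ≤ d x y * d t z + d x t * d y z

def distSet {X : Type*} (d : X → X → ℝ) (A : Set X) : Set ℝ :=
  {r | ∃ x ∈ A, ∃ y ∈ A, r = d x y}

noncomputable def sdiam {X : Type*} (d : X → X → ℝ) (A : Set X) : ℝ :=
  sSup (distSet d A)

def spectrum' {X : Type*} (d : X → X → ℝ) : Set ℝ := {r | ∃ x y : X, r = d x y}

def IsWeakSimilarity {X Y : Type*} (d : X → X → ℝ) (ρ : Y → Y → ℝ)
    (f : X → Y) (φ : ℝ → ℝ) : Prop :=
  Function.Bijective f ∧ StrictMonoOn φ (spectrum' d) ∧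
    φ '' spectrum' d = spectrum' ρ ∧ ∀ x y, φ (d x y) = ρ (f x) (f y)

/-- The topology `τ_d` generated by a semimetric `d`. -/
def tauD {X : Type*} (d : X → X → ℝ) : TopologicalSpace X where
  IsOpen A := ∀ a ∈ A, ∃ r > 0, {x | d a x < r} ⊆ A
  isOpen_univ := fun _ _ => ⟨1, one_pos, fun _ _ => trivial⟩
  isOpen_inter := fun A B hA hB a ha => by
    obtain ⟨r1, hr1, h1⟩ := hA a ha.1
    obtain ⟨r2, hr2, h2⟩ := hB a ha.2
    refine ⟨min r1 r2, lt_min hr1 hr2, fun x hx => ⟨h1 ?_, h2 ?_⟩⟩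
    · have hx' : d a x < min r1 r2 := hx
      exact lt_of_lt_of_le hx' (min_le_left r1 r2)
    · have hx' : d a x < min r1 r2 := hx
      exact lt_of_lt_of_le hx' (min_le_right r1 r2)
  isOpen_sUnion := fun S hS a ha => by
    obtain ⟨A, hA, haA⟩ := ha
    obtain ⟨r, hr, h⟩ := hS A hA a haA
    exact ⟨r, hr, fun x hx => ⟨A, hA, h hx⟩⟩

theorem stmt_0 {X : Type*} (d : X → X → ℝ) (hd : IsSemimetric d)
    (hclosed : ∀ (a : X) (r : ℝ), 0 < r → @IsClosed X (tauD d) {x | d a x ≤ r}) :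
    ∀ (x y : X) (xs : ℕ → X),
      Tendsto (fun n => d (xs n) x) atTop (𝓝 0) →
      Tendsto (fun n => d (xs n) y) atTop (𝓝 0) → x = y := by
  intro x y xs hx hy
  by_contra hne
  have hpos : 0 < d x y := lt_of_le_of_ne (hd.nonneg x y) (fun h => hne ((hd.eq_iff x y).mp h.symm))
  set r := d x y / 2 with hr
  have hrpos : 0 < r := by positivity
  have hcl := hclosed x r hrpos
  have hopen : (tauD d).IsOpen {z | d x z ≤ r}ᶜ := hcl.isOpen_compl
  have hyU : y ∈ {z | d x z ≤ r}ᶜ := by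
    simp only [Set.mem_compl_iff, Set.mem_setOf_eq, not_le]
    linarith
  obtain ⟨ε, hε, hsub⟩ := hopen y hyU
  have h1 : ∀ᶠ n in atTop, d (xs n) y < ε := by
    have := hy.eventually (gt_mem_nhds hε)
    exact this
  have h2 : ∀ᶠ n in atTop, d (xs n) x < r := hx.eventually (gt_mem_nhds hrpos)
  obtain ⟨n, hn1, hn2⟩ := (h1.and h2).exists
  have : xs n ∈ {z | d x z ≤ r}ᶜ := hsub (by simpa [hd.symm y (xs n)] using hn1)
  simp only [Set.mem_compl_iff, Set.mem_setOf_eq, not_le] at this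
  rw [hd.symm x (xs n)] at this
  linarith
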